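/- Let μ⁰ = Σ_{n=1}^{N₀} p⁰ₙ δ_{x⁰ₙ} and μʲ = Σ_{m=1}^{Nⱼ} pʲₘ δ_{xʲₘ} be discrete positive measures on ℝ^d, λ ≥ 0, and let γ be an optimal partial coupling for OPT_λ(μ⁰,μʲ) that is induced by a map, i.e. each row of γ has at most one nonzero entry. Let p̂ₙ = Σₘ γₙₘ, let x̂ₙ be the OPT barycentric points, and let μ̂ʲ = Σ_{n=1}^{N₀} p̂ₙ δ_{x̂ₙ} be the OPT barycentric projection. Then OPT_λ(μ⁰,μʲ) = OPT_λ(μ⁰,μ̂ʲ) + λ(|μʲ| − |μ̂ʲ|), where |μʲ| = Σₘ pʲₘ and |μ̂ʲ| = Σₙ p̂ₙ. -/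

import Mathlib

open scoped BigOperators

/-- A partial coupling between discrete positive measures with weight vectors `p`
and `q`: a nonnegative matrix whose row sums are `≤ p` and column sums are `≤ q`. -/
def IsPartialCouplingMat {N M : ℕ} (p : Fin N → ℝ) (q : Fin M → ℝ)
    (γ : Matrix (Fin N) (Fin M) ℝ) : Prop :=
  (∀ n m, 0 ≤ γ n m) ∧ (∀ n, ∑ m, γ n m ≤ p n) ∧ (∀ m, ∑ n, γ n m ≤ q m)

/-- The discrete partial transport cost
`C_λ(γ) = Σ ‖xₙ − yₘ‖² γₙₘ + λ(|p| + |q| − 2|γ|)`. -/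
noncomputable def partialCostMat {d N M : ℕ} (lam : ℝ) (p : Fin N → ℝ) (q : Fin M → ℝ)
    (x : Fin N → EuclideanSpace ℝ (Fin d)) (y : Fin M → EuclideanSpace ℝ (Fin d))
    (γ : Matrix (Fin N) (Fin M) ℝ) : ℝ :=
  (∑ n, ∑ m, ‖x n - y m‖ ^ 2 * γ n m) +
    lam * ((∑ n, p n) + (∑ m, q m) - 2 * ∑ n, ∑ m, γ n m)

/-- The discrete optimal partial transport value: the infimum of the partial
transport cost over all partial couplings. -/
noncomputable def OPTvalMat {d N M : ℕ} (lam : ℝ) (p : Fin N → ℝ) (q : Fin M → ℝ)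
    (x : Fin N → EuclideanSpace ℝ (Fin d)) (y : Fin M → EuclideanSpace ℝ (Fin d)) : ℝ :=
  sInf {c | ∃ γ : Matrix (Fin N) (Fin M) ℝ,
    IsPartialCouplingMat p q γ ∧ c = partialCostMat lam p q x y γ}

lemma partialCostMat_nonneg {d N M : ℕ} (lam : ℝ) (hlam : 0 ≤ lam)
    (p : Fin N → ℝ) (q : Fin M → ℝ)
    (x : Fin N → EuclideanSpace ℝ (Fin d)) (y : Fin M → EuclideanSpace ℝ (Fin d))
    (γ : Matrix (Fin N) (Fin M) ℝ) (h : IsPartialCouplingMat p q γ) :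
    0 ≤ partialCostMat lam p q x y γ := by
  obtain ⟨h0, hr, hc⟩ := h
  have h1 : 0 ≤ ∑ n, ∑ m, ‖x n - y m‖ ^ 2 * γ n m :=
    Finset.sum_nonneg fun n _ => Finset.sum_nonneg fun m _ =>
      mul_nonneg (by positivity) (h0 n m)
  have h2 : ∑ n, ∑ m, γ n m ≤ ∑ n, p n := Finset.sum_le_sum fun n _ => hr n
  have h3 : ∑ n, ∑ m, γ n m ≤ ∑ m, q m := by
    refine Finset.sum_comm.trans_le ?_
    exact Finset.sum_le_sum fun m _ => hc m
  have h4 : 0 ≤ lam * ((∑ n, p n) + (∑ m, q m) - 2 * ∑ n, ∑ m, γ n m) :=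
    mul_nonneg hlam (by linarith)
  unfold partialCostMat
  linarith

theorem opt_barycentric_projection_recovers_opt
    {d N0 Nj : ℕ}
    (lam : ℝ) (hlam : 0 ≤ lam)
    (p0 : Fin N0 → ℝ) (pj : Fin Nj → ℝ)
    (x0 : Fin N0 → EuclideanSpace ℝ (Fin d)) (xj : Fin Nj → EuclideanSpace ℝ (Fin d))
    (hp0 : ∀ n, 0 < p0 n) (hpj : ∀ m, 0 < pj m)
    (γ : Matrix (Fin N0) (Fin Nj) ℝ)
    (hγ : IsPartialCouplingMat p0 pj γ)
    (hγopt : ∀ γ', IsPartialCouplingMat p0 pj γ' →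
      partialCostMat lam p0 pj x0 xj γ ≤ partialCostMat lam p0 pj x0 xj γ')
    (hmap : ∀ n m m', γ n m ≠ 0 → γ n m' ≠ 0 → m = m')
    (phat : Fin N0 → ℝ) (hphat : ∀ n, phat n = ∑ m, γ n m)
    (xhat : Fin N0 → EuclideanSpace ℝ (Fin d))
    (hxhat : ∀ n, xhat n =
      if 0 < phat n then (phat n)⁻¹ • ∑ m, γ n m • xj m else x0 n) :
    OPTvalMat lam p0 pj x0 xj =
      OPTvalMat lam p0 phat x0 xhat + lam * ((∑ m, pj m) - ∑ n, phat n) := by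
  have hγ0 : ∀ n m, 0 ≤ γ n m := hγ.1
  have hphat0 : ∀ n, 0 ≤ phat n := fun n => by
    rw [hphat]; exact Finset.sum_nonneg fun m _ => hγ0 n m
  -- Key pointwise lemma
  have key : ∀ (n : Fin N0) (z : EuclideanSpace ℝ (Fin d)),
      ∑ m, ‖z - xj m‖ ^ 2 * γ n m = ‖z - xhat n‖ ^ 2 * phat n := by
    intro n z
    by_cases hp : 0 < phat n
    · have hne : ∃ m, γ n m ≠ 0 := by
        by_contra h
        push_neg at h
        have : phat n = 0 := by
          rw [hphat]; exact Finset.sum_eq_zero fun m _ => h m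
        linarith
      obtain ⟨m0, hm0⟩ := hne
      have hz : ∀ m, m ≠ m0 → γ n m = 0 := by
        intro m hm
        by_contra h
        exact hm (hmap n m m0 h hm0)
      have hps : phat n = γ n m0 := by
        rw [hphat]
        exact Finset.sum_eq_single m0 (fun m _ hm => hz m hm)
          (fun h => absurd (Finset.mem_univ m0) h)
      have hsm : (∑ m, γ n m • xj m) = γ n m0 • xj m0 :=
        Finset.sum_eq_single m0 (fun m _ hm => by rw [hz m hm, zero_smul])
          (fun h => absurd (Finset.mem_univ m0) h)
      have hx : xhat n = xj m0 := by
        rw [hxhat, if_pos hp, hsm, hps, inv_smul_smul₀ hm0]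
      calc ∑ m, ‖z - xj m‖ ^ 2 * γ n m = ‖z - xj m0‖ ^ 2 * γ n m0 :=
            Finset.sum_eq_single m0 (fun m _ hm => by rw [hz m hm, mul_zero])
              (fun h => absurd (Finset.mem_univ m0) h)
        _ = ‖z - xhat n‖ ^ 2 * phat n := by rw [hx, hps]
    · have hp0' : phat n = 0 := le_antisymm (not_lt.1 hp) (hphat0 n)
      have hz : ∀ m ∈ Finset.univ, γ n m = 0 :=
        (Finset.sum_eq_zero_iff_of_nonneg (fun m _ => hγ0 n m)).1
          (by rw [← hphat]; exact hp0')
      rw [hp0', mul_zero]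
      exact Finset.sum_eq_zero fun m hm => by rw [hz m hm, mul_zero]
  -- Bounded below
  have hbddj : BddBelow {c | ∃ γ' : Matrix (Fin N0) (Fin Nj) ℝ,
      IsPartialCouplingMat p0 pj γ' ∧ c = partialCostMat lam p0 pj x0 xj γ'} := by
    refine ⟨0, ?_⟩
    rintro c ⟨γ', hγ', rfl⟩
    exact partialCostMat_nonneg lam hlam _ _ _ _ _ hγ'
  have hbddh : BddBelow {c | ∃ γ' : Matrix (Fin N0) (Fin N0) ℝ,
      IsPartialCouplingMat p0 phat γ' ∧ c = partialCostMat lam p0 phat x0 xhat γ'} := by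
    refine ⟨0, ?_⟩
    rintro c ⟨γ', hγ', rfl⟩
    exact partialCostMat_nonneg lam hlam _ _ _ _ _ hγ'
  -- Step 1: OPT_j = C(γ)
  have h1 : OPTvalMat lam p0 pj x0 xj = partialCostMat lam p0 pj x0 xj γ := by
    apply le_antisymm
    · exact csInf_le hbddj ⟨γ, hγ, rfl⟩
    · exact le_csInf ⟨partialCostMat lam p0 pj x0 xj γ, γ, hγ, rfl⟩ (by rintro c ⟨γ', hγ', rfl⟩; exact hγopt γ' hγ')
  -- Γ: the diagonal coupling between p0 and phat
  set Γ : Matrix (Fin N0) (Fin N0) ℝ := fun n k => if n = k then phat n else 0 with hΓdef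
  have hΓapp : ∀ n k, Γ n k = if n = k then phat n else 0 := fun _ _ => rfl
  have hΓrow : ∀ n, ∑ k, Γ n k = phat n := by
    intro n
    simp [hΓapp]
  have hΓcol : ∀ k, ∑ n, Γ n k = phat k := by
    intro k
    rw [Finset.sum_congr rfl (fun n _ => hΓapp n k)]
    rw [Finset.sum_ite_eq' Finset.univ k phat]
    simp
  have hΓcoup : IsPartialCouplingMat p0 phat Γ := by
    refine ⟨?_, ?_, ?_⟩
    · intro n k
      rw [hΓapp]
      split
      · exact hphat0 n
      · exact le_refl 0
    · intro n
      rw [hΓrow n, hphat]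
      exact hγ.2.1 n
    · intro k
      rw [hΓcol k]
  have hΓcost : partialCostMat lam p0 phat x0 xhat Γ
      = partialCostMat lam p0 pj x0 xj γ - lam * ((∑ m, pj m) - ∑ n, phat n) := by
    unfold partialCostMat
    have e1 : ∀ n, ∑ k, ‖x0 n - xhat k‖ ^ 2 * Γ n k = ‖x0 n - xhat n‖ ^ 2 * phat n := by
      intro n
      rw [Finset.sum_congr rfl (fun k _ => by rw [hΓapp n k])]
      simp
    have e2 : ∑ n, ∑ k, ‖x0 n - xhat k‖ ^ 2 * Γ n k
        = ∑ n, ∑ m, ‖x0 n - xj m‖ ^ 2 * γ n m := by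
      refine Finset.sum_congr rfl fun n _ => ?_
      rw [e1 n, ← key n (x0 n)]
    have e3 : ∑ n, ∑ k, Γ n k = ∑ n, phat n :=
      Finset.sum_congr rfl fun n _ => hΓrow n
    have e4 : ∑ n, ∑ m, γ n m = ∑ n, phat n :=
      Finset.sum_congr rfl fun n _ => (hphat n).symm
    rw [e2, e3, e4]
    ring
  have h2 : OPTvalMat lam p0 phat x0 xhat ≤
      partialCostMat lam p0 pj x0 xj γ - lam * ((∑ m, pj m) - ∑ n, phat n) := by
    rw [← hΓcost]
    exact csInf_le hbddh ⟨Γ, hΓcoup, rfl⟩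
  -- Step 3: reverse inequality
  have h3 : ∀ η : Matrix (Fin N0) (Fin N0) ℝ, IsPartialCouplingMat p0 phat η →
      partialCostMat lam p0 pj x0 xj γ ≤
        partialCostMat lam p0 phat x0 xhat η + lam * ((∑ m, pj m) - ∑ n, phat n) := by
    intro η hη
    obtain ⟨hη0, hηr, hηc⟩ := hη
    have hηz : ∀ n k, phat k = 0 → η n k = 0 := by
      intro n k hk
      have hcol : ∑ n', η n' k = 0 :=
        le_antisymm (hk ▸ hηc k) (Finset.sum_nonneg fun n' _ => hη0 n' k)
      exact (Finset.sum_eq_zero_iff_of_nonneg (fun n' _ => hη0 n' k)).1 hcol n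
        (Finset.mem_univ n)
    set η' : Matrix (Fin N0) (Fin Nj) ℝ :=
      fun n m => ∑ k, (η n k / phat k) * γ k m with hη'def
    have hη'app : ∀ n m, η' n m = ∑ k, (η n k / phat k) * γ k m := fun _ _ => rfl
    have hterm : ∀ n k, (η n k / phat k) * phat k = η n k := by
      intro n k
      rcases eq_or_lt_of_le (hphat0 k) with h | h
      · simp [hηz n k h.symm]
      · exact div_mul_cancel₀ _ (ne_of_gt h)
    have hrow : ∀ n, ∑ m, η' n m = ∑ k, η n k := by
      intro n
      calc ∑ m, η' n m = ∑ k, ∑ m, (η n k / phat k) * γ k m := by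
            rw [Finset.sum_congr rfl (fun m _ => hη'app n m), Finset.sum_comm]
        _ = ∑ k, (η n k / phat k) * ∑ m, γ k m :=
            Finset.sum_congr rfl fun k _ => (Finset.mul_sum _ _ _).symm
        _ = ∑ k, η n k := by
            refine Finset.sum_congr rfl fun k _ => ?_
            rw [← hphat k]
            exact hterm n k
    have hcost : ∀ n, ∑ m, ‖x0 n - xj m‖ ^ 2 * η' n m
        = ∑ k, ‖x0 n - xhat k‖ ^ 2 * η n k := by
      intro n
      calc ∑ m, ‖x0 n - xj m‖ ^ 2 * η' n m
          = ∑ k, ∑ m, (η n k / phat k) * (‖x0 n - xj m‖ ^ 2 * γ k m) := by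
            rw [Finset.sum_congr rfl (fun m _ => by
              rw [hη'app n m, Finset.mul_sum]), Finset.sum_comm]
            exact Finset.sum_congr rfl fun k _ =>
              Finset.sum_congr rfl fun m _ => by ring
        _ = ∑ k, (η n k / phat k) * (‖x0 n - xhat k‖ ^ 2 * phat k) := by
            refine Finset.sum_congr rfl fun k _ => ?_
            rw [← Finset.mul_sum, key k (x0 n)]
        _ = ∑ k, ‖x0 n - xhat k‖ ^ 2 * η n k := by
            refine Finset.sum_congr rfl fun k _ => ?_
            linear_combination (‖x0 n - xhat k‖ ^ 2) * hterm n k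
    have hcol' : ∀ m, ∑ n, η' n m ≤ pj m := by
      intro m
      have e : ∑ n, η' n m = ∑ k, ((∑ n, η n k) / phat k) * γ k m := by
        rw [Finset.sum_congr rfl (fun n _ => hη'app n m), Finset.sum_comm]
        refine Finset.sum_congr rfl fun k _ => ?_
        rw [Finset.sum_div, Finset.sum_mul]
      rw [e]
      calc ∑ k, ((∑ n, η n k) / phat k) * γ k m ≤ ∑ k, γ k m := by
            refine Finset.sum_le_sum fun k _ => ?_
            rcases eq_or_lt_of_le (hphat0 k) with h | h
            · have hs : (∑ n, η n k) = 0 :=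
                Finset.sum_eq_zero fun n _ => hηz n k h.symm
              rw [hs, zero_div, zero_mul]
              exact hγ0 k m
            · have hd : (∑ n, η n k) / phat k ≤ 1 := (div_le_one h).2 (hηc k)
              calc ((∑ n, η n k) / phat k) * γ k m ≤ 1 * γ k m :=
                    mul_le_mul_of_nonneg_right hd (hγ0 k m)
                _ = γ k m := one_mul _
        _ ≤ pj m := hγ.2.2 m
    have hη'coup : IsPartialCouplingMat p0 pj η' := by
      refine ⟨?_, ?_, hcol'⟩
      · intro n m
        rw [hη'app]
        exact Finset.sum_nonneg fun k _ =>
          mul_nonneg (div_nonneg (hη0 n k) (hphat0 k)) (hγ0 k m)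
      · intro n
        rw [hrow n]
        exact hηr n
    have hcosteq : partialCostMat lam p0 pj x0 xj η' =
        partialCostMat lam p0 phat x0 xhat η + lam * ((∑ m, pj m) - ∑ n, phat n) := by
      unfold partialCostMat
      have e1 : ∑ n, ∑ m, ‖x0 n - xj m‖ ^ 2 * η' n m
          = ∑ n, ∑ k, ‖x0 n - xhat k‖ ^ 2 * η n k :=
        Finset.sum_congr rfl fun n _ => hcost n
      have e2 : ∑ n, ∑ m, η' n m = ∑ n, ∑ k, η n k :=
        Finset.sum_congr rfl fun n _ => hrow n
      rw [e1, e2]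
      ring
    calc partialCostMat lam p0 pj x0 xj γ ≤ partialCostMat lam p0 pj x0 xj η' :=
          hγopt η' hη'coup
      _ = _ := hcosteq
  have h4 : partialCostMat lam p0 pj x0 xj γ - lam * ((∑ m, pj m) - ∑ n, phat n)
      ≤ OPTvalMat lam p0 phat x0 xhat := by
    refine le_csInf ⟨partialCostMat lam p0 phat x0 xhat Γ, Γ, hΓcoup, rfl⟩ ?_
    rintro c ⟨η, hη, rfl⟩
    have := h3 η hη
    linarith
  rw [h1]
  linarith
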